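/- arXiv:1409.5003 — 4 statements merged into one kernel-verified Lean document; each statement's English description precedes it below -/
import Mathlib

section
/- Define s = f ∘ t, so that s(k,l) = (k+l−1, n+1−l) for all (k,l) ∈ M_n. Then s^{n+1} = f^{n−1} as order automorphisms of M_n (the combinatorial form of the abstract fractionally Calabi–Yau property: A_n-quivers have Calabi–Yau dimension (n−1)/(n+1)). -/
/-- The mesh poset `M_n`: pairs `(k,l)` of integers with `0 ≤ l ≤ n+1`. -/
def Mesh (n : ℕ) : Type := {p : ℤ × ℤ // 0 ≤ p.2 ∧ p.2 ≤ (n : ℤ) + 1}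

/-- The partial order: `(k,l) ≤ (k',l')` iff `k ≤ k'` and `k + l ≤ k' + l'`. -/
instance (n : ℕ) : PartialOrder (Mesh n) where
  le p q := p.1.1 ≤ q.1.1 ∧ p.1.1 + p.1.2 ≤ q.1.1 + q.1.2
  le_refl p := ⟨le_refl _, le_refl _⟩
  le_trans p q r hpq hqr := ⟨hpq.1.trans hqr.1, hpq.2.trans hqr.2⟩
  le_antisymm := by
    rintro ⟨⟨pk, pl⟩, hp⟩ ⟨⟨qk, ql⟩, hq⟩ ⟨h1, h2⟩ ⟨h3, h4⟩
    dsimp only at h1 h2 h3 h4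
    have hk : pk = qk := le_antisymm h1 h3
    have hl : pl = ql := by omega
    subst hk; subst hl; rfl

/-- The flip symmetry `f(k,l) = (k+l, n+1-l)`. -/
def meshF (n : ℕ) (p : Mesh n) : Mesh n :=
  ⟨(p.1.1 + p.1.2, (n : ℤ) + 1 - p.1.2), by obtain ⟨h1, h2⟩ := p.2; constructor <;> omega⟩

/-- The translation `t(k,l) = (k-1, l)`. -/
def meshT (n : ℕ) (p : Mesh n) : Mesh n := ⟨(p.1.1 - 1, p.1.2), p.2⟩



/-- Shift by `a` in the first coordinate. -/
def meshShift (n : ℕ) (a : ℤ) (p : Mesh n) : Mesh n := ⟨(p.1.1 + a, p.1.2), p.2⟩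

lemma meshShift_shift (n : ℕ) (a b : ℤ) (p : Mesh n) :
    meshShift n a (meshShift n b p) = meshShift n (a + b) p := by
  exact Subtype.ext (by simp [meshShift, Prod.ext_iff]; ring)

lemma meshS_apply (n : ℕ) (p : Mesh n) : (meshF n ∘ meshT n) p =
    ⟨(p.1.1 + p.1.2 - 1, (n : ℤ) + 1 - p.1.2),
      ⟨by have := p.2.2; omega, by have := p.2.1; omega⟩⟩ := by
  exact Subtype.ext (by simp [Function.comp, meshF, meshT, Prod.ext_iff]; ring)

lemma meshS_sq (n : ℕ) (p : Mesh n) :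
    (meshF n ∘ meshT n) ((meshF n ∘ meshT n) p) = meshShift n ((n : ℤ) - 1) p := by
  rw [meshS_apply, meshS_apply]
  exact Subtype.ext (by simp [meshShift, Prod.ext_iff]; ring)

lemma meshF_sq (n : ℕ) (p : Mesh n) :
    meshF n (meshF n p) = meshShift n ((n : ℤ) + 1) p := by
  exact Subtype.ext (by simp [meshF, meshShift, Prod.ext_iff])

lemma meshS_iter (n : ℕ) (m : ℕ) (p : Mesh n) :
    (meshF n ∘ meshT n)^[2 * m] p = meshShift n ((m : ℤ) * ((n : ℤ) - 1)) p := by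
  induction m generalizing p with
  | zero => exact Subtype.ext (by simp [meshShift])
  | succ m ih =>
    have h : 2 * (m + 1) = 2 * m + 2 := by ring
    have h2 : (meshF n ∘ meshT n)^[2] p = (meshF n ∘ meshT n) ((meshF n ∘ meshT n) p) := rfl
    rw [h, Function.iterate_add_apply, h2, meshS_sq, ih, meshShift_shift]
    exact Subtype.ext (by simp [meshShift, Prod.ext_iff]; ring)

lemma meshF_iter (n : ℕ) (m : ℕ) (p : Mesh n) :
    (meshF n)^[2 * m] p = meshShift n ((m : ℤ) * ((n : ℤ) + 1)) p := by
  induction m generalizing p with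
  | zero => exact Subtype.ext (by simp [meshShift])
  | succ m ih =>
    have h : 2 * (m + 1) = 2 * m + 2 := by ring
    have h2 : (meshF n)^[2] p = meshF n (meshF n p) := rfl
    rw [h, Function.iterate_add_apply, h2, meshF_sq, ih, meshShift_shift]
    exact Subtype.ext (by simp [meshShift, Prod.ext_iff]; ring)

/-- with `s = f ∘ t`, explicitly `s(k,l) = (k+l-1, n+1-l)`, one has
`s^{n+1} = f^{n-1}` (the combinatorial fractionally Calabi–Yau property). -/
theorem mesh_fractionally_calabi_yau (n : ℕ) (hn : 1 ≤ n) :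
    (∀ p : Mesh n, (meshF n ∘ meshT n) p =
      ⟨(p.1.1 + p.1.2 - 1, (n : ℤ) + 1 - p.1.2), by
        obtain ⟨h1, h2⟩ := p.2; constructor <;> omega⟩) ∧
    (meshF n ∘ meshT n)^[n + 1] = (meshF n)^[n - 1] := by
  refine ⟨meshS_apply n, ?_⟩
  funext p
  rcases Nat.even_or_odd n with ⟨j, hj⟩ | ⟨j, hj⟩
  · -- n even: n = 2j, j ≥ 1
    have hj1 : 1 ≤ j := by omega
    have e1 : n + 1 = 2 * j + 1 := by omega
    have e2 : n - 1 = 2 * (j - 1) + 1 := by omega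
    rw [e1, e2, Function.iterate_add_apply, Function.iterate_add_apply,
      Function.iterate_one, Function.iterate_one, meshS_iter, meshF_iter,
      meshS_apply, meshF]
    refine Subtype.ext ?_
    simp only [meshShift]
    have : ((j - 1 : ℕ) : ℤ) = (j : ℤ) - 1 := by omega
    rw [this]
    have hjn : (n : ℤ) = 2 * j := by omega
    rw [Prod.ext_iff]
    refine ⟨?_, rfl⟩
    dsimp; nlinarith [hjn]
  · -- n odd: n = 2j+1
    have e1 : n + 1 = 2 * (j + 1) := by omega
    have e2 : n - 1 = 2 * j := by omega
    rw [e1, e2, meshS_iter, meshF_iter]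
    refine Subtype.ext ?_
    simp only [meshShift]
    have hjn : (n : ℤ) = 2 * j + 1 := by omega
    push_cast
    rw [Prod.ext_iff]
    refine ⟨?_, rfl⟩
    dsimp; nlinarith [hjn]
end

section
/- For all integers x and y, the composite f^x ∘ t^y is the identity map of M_n if and only if x is even and 2y = x(n+1). In particular, the only relations among f and t are generated by the commutativity relation ft = tf and the relation f² = t^{−(n+1)}. -/
/-- The flip `f` as a permutation of `M_n`. -/
def meshFEquiv (n : ℕ) : Equiv.Perm (Mesh n) where
  toFun := meshF n
  invFun p := ⟨(p.1.1 + p.1.2 - ((n : ℤ) + 1), (n : ℤ) + 1 - p.1.2), by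
    obtain ⟨h1, h2⟩ := p.2; constructor <;> omega⟩
  left_inv p := by
    obtain ⟨⟨pk, pl⟩, hp⟩ := p
    apply Subtype.ext
    simp only [meshF]
    apply Prod.ext <;> dsimp <;> ring
  right_inv p := by
    obtain ⟨⟨pk, pl⟩, hp⟩ := p
    apply Subtype.ext
    simp only [meshF]
    apply Prod.ext <;> dsimp <;> ring

/-- The translation `t` as a permutation of `M_n`. -/
def meshTEquiv (n : ℕ) : Equiv.Perm (Mesh n) where
  toFun := meshT n
  invFun p := ⟨(p.1.1 + 1, p.1.2), p.2⟩
  left_inv p := by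
    apply Subtype.ext
    simp only [meshT]
    apply Prod.ext <;> dsimp <;> ring
  right_inv p := by
    apply Subtype.ext
    simp only [meshT]
    apply Prod.ext <;> dsimp <;> ring


lemma meshT_zpow (n : ℕ) (y : ℤ) (p : Mesh n) :
    ((meshTEquiv n ^ y) p).1 = (p.1.1 - y, p.1.2) := by
  induction y using Int.induction_on generalizing p with
  | zero => simp
  | succ k ih =>
    rw [zpow_add_one, Equiv.Perm.mul_apply]
    rw [ih]
    have : (meshTEquiv n) p = ⟨(p.1.1 - 1, p.1.2), p.2⟩ := rfl
    rw [this]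
    dsimp
    ext <;> dsimp <;> ring
  | pred k ih =>
    rw [zpow_sub_one, Equiv.Perm.mul_apply]
    rw [ih]
    have : (meshTEquiv n)⁻¹ p = ⟨(p.1.1 + 1, p.1.2), p.2⟩ := rfl
    rw [this]
    dsimp
    ext <;> dsimp <;> ring

lemma meshF_sq_s2 (n : ℕ) : meshFEquiv n ^ (2:ℤ) = meshTEquiv n ^ (-((n:ℤ)+1)) := by
  apply Equiv.ext
  intro p
  apply Subtype.ext
  rw [meshT_zpow]
  rw [zpow_two, Equiv.Perm.mul_apply]
  have h1 : ∀ q : Mesh n, ((meshFEquiv n) q).1 = (q.1.1 + q.1.2, (n:ℤ) + 1 - q.1.2) :=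
    fun q => rfl
  simp only [h1]
  ext <;> dsimp <;> ring

lemma meshT_zpow_eq_one_iff (n : ℕ) (z : ℤ) : meshTEquiv n ^ z = 1 ↔ z = 0 := by
  constructor
  · intro h
    have p0 : Mesh n := ⟨(0, 0), le_refl 0, by positivity⟩
    have := congrArg Subtype.val (Equiv.ext_iff.mp h p0)
    rw [meshT_zpow] at this
    have h1 := congrArg Prod.fst this
    simpa using h1
  · rintro rfl; simp

theorem mesh_f_t_relations' (n : ℕ) (hn : 1 ≤ n) (x y : ℤ) :
    meshFEquiv n ^ x * meshTEquiv n ^ y = 1 ↔ Even x ∧ 2 * y = x * ((n : ℤ) + 1) := by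
  rcases Int.even_or_odd x with ⟨m, hm⟩ | ⟨m, hm⟩
  · have hx : x = 2 * m := by omega
    subst hx
    rw [zpow_mul, meshF_sq_s2, ← zpow_mul, ← zpow_add, meshT_zpow_eq_one_iff]
    constructor
    · intro h; exact ⟨⟨m, by ring⟩, by nlinarith⟩
    · rintro ⟨_, h⟩; nlinarith
  · have hx : x = 2 * m + 1 := by omega
    constructor
    · intro h
      exfalso
      set p0 : Mesh n := ⟨(0, 0), le_refl 0, by positivity⟩ with hp0
      have h1 := congrArg Subtype.val (Equiv.ext_iff.mp h p0)
      rw [Equiv.Perm.mul_apply] at h1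
      rw [hx, zpow_add, zpow_one, Equiv.Perm.mul_apply] at h1
      rw [zpow_mul, meshF_sq_s2, ← zpow_mul] at h1
      set q := (meshTEquiv n ^ y) p0 with hq
      have hq2 : q.1.2 = 0 := by rw [hq, meshT_zpow]
      have hf : ((meshFEquiv n) q).1 = (q.1.1 + q.1.2, (n:ℤ) + 1 - q.1.2) := rfl
      rw [meshT_zpow, hf, hq2] at h1
      have h2 := congrArg Prod.snd h1
      simp at h2
      have h3 : p0.1.2 = 0 := rfl
      omega
    · rintro ⟨hev, _⟩
      rw [Int.even_iff] at hev
      omega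

/-- `f^x ∘ t^y = id` if and only if `x` is even and `2y = x(n+1)`. -/
theorem mesh_f_t_relations (n : ℕ) (hn : 1 ≤ n) (x y : ℤ) :
    meshFEquiv n ^ x * meshTEquiv n ^ y = 1 ↔ Even x ∧ 2 * y = x * ((n : ℤ) + 1) :=
  mesh_f_t_relations' n hn x y
end

section
/- The map v : {1,…,n} × {1,…,n}ᵒᵖ × {1,…,n} → M_n defined by v(k,l,m) = (0,m) if k ≤ l, v(k,l,m) = (m,0) if l < k and m < k, and v(k,l,m) = (k−1, m+1−k) if l < k and k ≤ m, is monotone, where the outer factors {1,…,n} carry the usual linear order, the middle factor carries the opposite order, and the domain the product order. Moreover v(k,1,n) = (k−1, n+1−k) for every k ∈ {1,…,n}. -/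
/-- The linearly ordered set `{1, …, n}` (as a subtype of `ℤ`). -/
abbrev Ln (n : ℕ) : Type := {l : ℤ // 1 ≤ l ∧ l ≤ (n : ℤ)}

/-- The map `v : {1,…,n} × {1,…,n}ᵒᵖ × {1,…,n} → M_n` with `v(k,l,m) = (0,m)` if `k ≤ l`,
`v(k,l,m) = (m,0)` if `l < k` and `m < k`, and `v(k,l,m) = (k-1, m+1-k)` otherwise. -/
def vMap (n : ℕ) (x : Ln n × (Ln n)ᵒᵈ × Ln n) : Mesh n :=
  if x.1.1 ≤ (OrderDual.ofDual x.2.1).1 then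
    ⟨(0, x.2.2.1), by obtain ⟨h1, h2⟩ := x.2.2.2; constructor <;> omega⟩
  else if h : x.2.2.1 < x.1.1 then
    ⟨(x.2.2.1, 0), by constructor <;> omega⟩
  else
    ⟨(x.1.1 - 1, x.2.2.1 + 1 - x.1.1), by
      obtain ⟨h1, h2⟩ := x.1.2
      obtain ⟨h3, h4⟩ := x.2.2.2
      constructor <;> omega⟩

theorem vMap_val (n : ℕ) (x : Ln n × (Ln n)ᵒᵈ × Ln n) :
    (vMap n x).1 = if x.1.1 ≤ (x.2.1 : Ln n).1 then ((0 : ℤ), x.2.2.1)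
      else if x.2.2.1 < x.1.1 then (x.2.2.1, 0) else (x.1.1 - 1, x.2.2.1 + 1 - x.1.1) := by
  by_cases c1 : x.1.1 ≤ (x.2.1 : Ln n).1
  · rw [if_pos c1]; exact congrArg Subtype.val (if_pos c1 : vMap n x = _)
  · rw [if_neg c1]
    by_cases c2 : x.2.2.1 < x.1.1
    · rw [if_pos c2]
      exact (congrArg Subtype.val (if_neg c1 : vMap n x = _)).trans
        (congrArg Subtype.val (dif_pos c2 : (dite _ _ _ : Mesh n) = _))
    · rw [if_neg c2]
      exact (congrArg Subtype.val (if_neg c1 : vMap n x = _)).trans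
        (congrArg Subtype.val (dif_neg c2 : (dite _ _ _ : Mesh n) = _))

/-- the map `v` is monotone (the middle factor carrying the opposite
order), and `v(k, 1, n) = (k-1, n+1-k)` for every `k ∈ {1,…,n}`. -/
theorem vMap_monotone (n : ℕ) (hn : 1 ≤ n) :
    Monotone (vMap n) ∧
    ∀ k : Ln n,
      vMap n (k, OrderDual.toDual ⟨1, le_refl 1, by exact_mod_cast hn⟩,
          ⟨(n : ℤ), by exact_mod_cast hn, le_refl _⟩) =
        ⟨(k.1 - 1, (n : ℤ) + 1 - k.1), by obtain ⟨h1, h2⟩ := k.2; constructor <;> omega⟩ := by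
  constructor
  · rintro ⟨⟨k, hk1, hk2⟩, l, ⟨m, hm1, hm2⟩⟩ ⟨⟨k', hk1', hk2'⟩, l', ⟨m', hm1', hm2'⟩⟩ ⟨h1, h2, h3⟩
    obtain ⟨lv, hl1, hl2⟩ := l
    obtain ⟨lv', hl1', hl2'⟩ := l'
    have h2' : lv' ≤ lv := h2
    show _ ∧ _
    have e : ∀ (a : (Ln n)ᵒᵈ), (OrderDual.ofDual a).1 = a.1 := fun _ => rfl
    rw [vMap_val, vMap_val]
    clear e
    simp only at *
    split_ifs <;> simp_all <;> omega
  · rintro ⟨k, hk1, hk2⟩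
    apply Subtype.ext
    rw [vMap_val]
    have h1' : ((OrderDual.toDual (⟨1, le_refl 1, by exact_mod_cast hn⟩ : Ln n)) : Ln n).1 = 1 := rfl
    simp only [h1']
    split_ifs with h h'
    · simp only [Prod.ext_iff]
      constructor <;> [omega; omega]
    · exfalso; omega
    · rfl
end

section
/- Let Q be a loopless quiver (s(e) ≠ t(e) for every edge e) with exactly n vertices, and let (a₁,…,a_n) be an admissible sequence of sinks, i.e., an enumeration without repetition of all vertices such that a₁ is a sink of Q and, for each 2 ≤ i ≤ n, the vertex a_i is a sink of σ_{a_{i−1}}⋯σ_{a₁}Q. Then the full composite of reflections returns the original quiver: σ_{a_n}σ_{a_{n−1}}⋯σ_{a₁}Q = Q, i.e., the resulting source and target maps coincide with those of Q. -/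
/-- Reflecting a quiver, given by a pair `(source map, target map)`, at a vertex `a`:
every edge with target `a` gets its source and target interchanged. -/
def reflPair {V E : Type*} [DecidableEq V] (p : (E → V) × (E → V)) (a : V) :
    (E → V) × (E → V) :=
  (fun e => if p.2 e = a then p.2 e else p.1 e,
   fun e => if p.2 e = a then p.1 e else p.2 e)

/-- Iterated reflection `σ_{a_m} ⋯ σ_{a_1} Q` along a list `[a_1, …, a_m]` of vertices. -/
def reflectList {V E : Type*} [DecidableEq V] (s t : E → V) (l : List V) :
    (E → V) × (E → V) :=
  l.foldl reflPair (s, t)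

/-- One reflection step on a single edge, given by its pair `(source, target)`. -/
def reflStep {V : Type*} [DecidableEq V] (p : V × V) (v : V) : V × V :=
  if p.2 = v then (p.2, p.1) else p

lemma reflectList_eq_foldl {V E : Type*} [DecidableEq V]
    (l : List V) (s t : E → V) (e : E) :
    ((reflectList s t l).1 e, (reflectList s t l).2 e) = l.foldl reflStep (s e, t e) := by
  induction l generalizing s t with
  | nil => rfl
  | cons v l ih =>
    have h1 : reflectList s t (v :: l)
        = reflectList (reflPair (s, t) v).1 (reflPair (s, t) v).2 l := by
      simp [reflectList]
    rw [h1, ih, List.foldl_cons]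
    congr 1
    simp only [reflPair, reflStep]
    by_cases h : t e = v <;> simp [h]

lemma foldl_stay {V : Type*} [DecidableEq V] (x y : V) (l : List V)
    (h : ∀ v ∈ l, v ≠ y) : l.foldl reflStep (x, y) = (x, y) := by
  induction l with
  | nil => rfl
  | cons v l ih =>
    have hv : v ≠ y := h v (List.mem_cons_self)
    have hstep : reflStep (x, y) v = (x, y) := by
      simp [reflStep, Ne.symm hv]
    rw [List.foldl_cons, hstep, ih (fun w hw => h w (List.mem_cons_of_mem _ hw))]

lemma key {V : Type*} [DecidableEq V] (x y : V) (hxy : x ≠ y) (l : List V)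
    (hnd : l.Nodup) (hx : x ∈ l) (hy : y ∈ l)
    (hs : ∀ (l1 : List V) (v : V) (l2 : List V), l = l1 ++ v :: l2 →
      (l1.foldl reflStep (x, y)).1 ≠ v) :
    l.foldl reflStep (x, y) = (x, y) := by
  obtain ⟨l1, l2, rfl⟩ := List.append_of_mem hy
  have hnd1 : l1.Nodup := (List.nodup_append'.mp hnd).1
  have hnd2 : (y :: l2).Nodup := (List.nodup_append'.mp hnd).2.1
  have hdisj := (List.nodup_append'.mp hnd).2.2
  have hy1 : y ∉ l1 := fun h => hdisj h (List.mem_cons_self)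
  have hy2 : y ∉ l2 := (List.nodup_cons.mp hnd2).1
  -- x is not in l1
  have hx1 : x ∉ l1 := by
    intro hxl1
    obtain ⟨p, q, rfl⟩ := List.append_of_mem hxl1
    have hyp : y ∉ p := fun h => hy1 (List.mem_append.mpr (Or.inl h))
    have := hs p x (q ++ y :: l2) (by simp)
    rw [foldl_stay x y p (fun v hv h' => hyp (h' ▸ hv))] at this
    exact this rfl
  have hx2 : x ∈ l2 := by
    rcases List.mem_append.mp hx with h | h
    · exact absurd h hx1
    · rcases List.mem_cons.mp h with h | h
      · exact absurd h hxy
      · exact h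
  obtain ⟨l3, l4, rfl⟩ := List.append_of_mem hx2
  have hx3 : x ∉ l3 := by
    have h0 := (List.nodup_cons.mp hnd2).2
    have h3 := (List.nodup_append'.mp h0).2.2
    exact fun h => h3 h (List.mem_cons_self)
  have hy4 : y ∉ l4 := fun h => hy2 (List.mem_append.mpr (Or.inr (List.mem_cons_of_mem _ h)))
  rw [List.foldl_append, foldl_stay x y l1 (fun v hv h' => hy1 (h' ▸ hv)),
    List.foldl_cons]
  have h1 : reflStep (x, y) y = (y, x) := by simp [reflStep]
  rw [h1, List.foldl_append, foldl_stay y x l3 (fun v hv h' => hx3 (h' ▸ hv)),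
    List.foldl_cons]
  have h2 : reflStep (y, x) x = (x, y) := by simp [reflStep]
  rw [h2, foldl_stay x y l4 (fun v hv h' => hy4 (h' ▸ hv))]

/-- for a loopless quiver with exactly `n` vertices and an admissible
sequence of sinks `(a₁, …, a_n)` (an enumeration without repetition of all vertices such
that each `a_i` is a sink of `σ_{a_{i-1}} ⋯ σ_{a_1} Q`), the full composite of reflections
returns the original quiver: `σ_{a_n} ⋯ σ_{a_1} Q = Q`. -/
theorem admissible_sequence_reflections_identity
    (V E : Type*) [Fintype V] [DecidableEq V] (s t : E → V)
    (hloopless : ∀ e, s e ≠ t e)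
    (n : ℕ) (a : Fin n → V) (ha : Function.Bijective a)
    (hadm : ∀ i : Fin n, ∀ e, (reflectList s t ((List.ofFn a).take i)).1 e ≠ a i) :
    reflectList s t (List.ofFn a) = (s, t) := by
  set l := List.ofFn a with hl
  have hnd : l.Nodup := List.nodup_ofFn.mpr ha.injective
  have hmem : ∀ v : V, v ∈ l := by
    intro v
    obtain ⟨i, rfl⟩ := ha.surjective v
    simp [hl, List.mem_ofFn]
  have hlenl : l.length = n := by simp [hl]
  have hkey : ∀ e : E, l.foldl reflStep (s e, t e) = (s e, t e) := by
    intro e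
    apply key (s e) (t e) (hloopless e) l hnd (hmem _) (hmem _)
    intro l1 v l2 hdec
    have hlen : l1.length < n := by
      have := hlenl
      rw [hdec] at this
      simp at this
      omega
    have hv : a ⟨l1.length, hlen⟩ = v := by
      have h1 : l[l1.length]'(by omega) = a ⟨l1.length, hlen⟩ := by
        simp [hl]
      have h2 : l[l1.length]'(by omega) = v := by
        rw [List.getElem_of_eq hdec, List.getElem_append_right (le_refl _)]
        simp
      rw [← h1, h2]
    have htake : l.take l1.length = l1 := by
      rw [hdec]
      simp
    have hr : (reflectList s t (l.take l1.length)).1 e = (l1.foldl reflStep (s e, t e)).1 := by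
      rw [htake]
      exact congrArg Prod.fst (reflectList_eq_foldl l1 s t e)
    intro hc
    exact hadm ⟨l1.length, hlen⟩ e (hr.trans (hc.trans hv.symm))
  have h1 : ∀ e, (reflectList s t l).1 e = s e := fun e =>
    congrArg Prod.fst ((reflectList_eq_foldl l s t e).trans (hkey e))
  have h2 : ∀ e, (reflectList s t l).2 e = t e := fun e =>
    congrArg Prod.snd ((reflectList_eq_foldl l s t e).trans (hkey e))
  exact Prod.ext (funext h1) (funext h2)
end
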